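/- Let φ_p : [0,1] → [0,1] be continuous with φ_p(s) > 0 for s > 0, and let J = [q_0 ≤ ⋯ ≤ q_n] be a flag in a poset P. Then the φ_p-standard neighborhood {x in the realized stratified simplex : s_{¬≤p}(x) ≤ φ_p(s_{¬<p}(x))·s_p(x)} is a neighborhood (in the usual topological sense) of the p-stratum {x : s(x) = p} of the realized simplex. -/

import Mathlib

noncomputable section
open Finset Classical

/-- Membership in the standard `n`-simplex: nonnegative coordinates summing to `1`. -/
def IsSimplexPt {n : ℕ} (x : Fin (n + 1) → ℝ) : Prop :=
  (∀ i, 0 ≤ x i) ∧ ∑ i, x i = 1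

/-- `s_p(x)`: sum of the coordinates of `x` at vertices labeled `p`. -/
def sEq {n : ℕ} {P : Type*} [PartialOrder P] (L : Fin (n + 1) → P) (p : P)
    (x : Fin (n + 1) → ℝ) : ℝ :=
  ∑ i ∈ Finset.univ.filter (fun i => L i = p), x i

/-- `s_{≤p}(x)`: sum of the coordinates of `x` at vertices with label `≤ p`. -/
def sLe {n : ℕ} {P : Type*} [PartialOrder P] (L : Fin (n + 1) → P) (p : P)
    (x : Fin (n + 1) → ℝ) : ℝ :=
  ∑ i ∈ Finset.univ.filter (fun i => L i ≤ p), x i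

/-- `s_{¬≤p}(x)`: sum of the coordinates of `x` at vertices whose label is not `≤ p`. -/
def sNotLe {n : ℕ} {P : Type*} [PartialOrder P] (L : Fin (n + 1) → P) (p : P)
    (x : Fin (n + 1) → ℝ) : ℝ :=
  ∑ i ∈ Finset.univ.filter (fun i => ¬ L i ≤ p), x i

/-- `s_{¬<p}(x)`: sum of the coordinates of `x` at vertices whose label is not `< p`. -/
def sNotLt {n : ℕ} {P : Type*} [PartialOrder P] (L : Fin (n + 1) → P) (p : P)
    (x : Fin (n + 1) → ℝ) : ℝ :=
  ∑ i ∈ Finset.univ.filter (fun i => ¬ L i < p), x i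

/-- The stratification of the realized simplex with monotone vertex labels `L`:
`stratOf L x = max {L i : x i > 0}`, computed as the label of the largest index with
positive coordinate (for `x` in the simplex this is the supremum of the labels of the
positive coordinates, since `L` is monotone). -/
def stratOf {n : ℕ} {P : Type*} [PartialOrder P] (L : Fin (n + 1) → P)
    (x : Fin (n + 1) → ℝ) : P :=
  L ((Finset.univ.filter (fun i => 0 < x i)).sup id)

/-- Let `φ_p : [0,1] → [0,1]` be continuous with `φ_p(s) > 0` for `s > 0`, and let `L`
describe a flag `[q_0 ≤ ⋯ ≤ q_n]` in a poset `P`. Then the `φ_p`-standard neighborhood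
`{x : s_{¬≤p}(x) ≤ φ_p(s_{¬<p}(x)) · s_p(x)}` is a neighborhood of the `p`-stratum of
the realized stratified simplex. -/
lemma aux_sum_mem_Icc {n : ℕ} {x : Fin (n+1) → ℝ} (hx : IsSimplexPt x)
    (s : Finset (Fin (n+1))) : (∑ i ∈ s, x i) ∈ Set.Icc (0:ℝ) 1 := by
  constructor
  · exact Finset.sum_nonneg fun i _ => hx.1 i
  · rw [← hx.2]
    exact Finset.sum_le_sum_of_subset_of_nonneg (Finset.subset_univ s)
      (fun i _ _ => hx.1 i)

theorem phiStandardNhd_mem_nhdsSet {n : ℕ} {P : Type*} [PartialOrder P]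
    (L : Fin (n + 1) → P) (hL : Monotone L) (p : P) (φ : ℝ → ℝ)
    (hφc : ContinuousOn φ (Set.Icc 0 1))
    (hφm : ∀ s ∈ Set.Icc (0 : ℝ) 1, φ s ∈ Set.Icc (0 : ℝ) 1)
    (hφpos : ∀ s ∈ Set.Icc (0 : ℝ) 1, 0 < s → 0 < φ s) :
    {x : {x : Fin (n + 1) → ℝ // IsSimplexPt x} |
        sNotLe L p x.1 ≤ φ (sNotLt L p x.1) * sEq L p x.1} ∈
      nhdsSet {x : {x : Fin (n + 1) → ℝ // IsSimplexPt x} | stratOf L x.1 = p} := by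
  classical
  set T := {x : Fin (n + 1) → ℝ // IsSimplexPt x}
  have hsum : ∀ (f : Fin (n+1) → Prop),
      Continuous (fun x : T => ∑ i ∈ Finset.univ.filter f, x.1 i) := by
    intro f
    exact continuous_finset_sum _ fun i _ =>
      (continuous_apply i).comp continuous_subtype_val
  have hNotLt : Continuous (fun x : T => sNotLt L p x.1) := by
    unfold sNotLt
    exact continuous_finset_sum _ fun i _ =>
      (continuous_apply i).comp continuous_subtype_val
  have hEq : Continuous (fun x : T => sEq L p x.1) := hsum _
  have hNotLe : Continuous (fun x : T => sNotLe L p x.1) := by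
    unfold sNotLe
    exact continuous_finset_sum _ fun i _ =>
      (continuous_apply i).comp continuous_subtype_val
  have hmem : ∀ x : T, sNotLt L p x.1 ∈ Set.Icc (0:ℝ) 1 :=
    fun x => aux_sum_mem_Icc x.2 _
  have hφ : Continuous (fun x : T => φ (sNotLt L p x.1)) :=
    hφc.comp_continuous hNotLt hmem
  set F : T → ℝ := fun x => φ (sNotLt L p x.1) * sEq L p x.1 - sNotLe L p x.1 with hF
  have hFc : Continuous F := ((hφ.mul hEq).sub hNotLe)
  have hVopen : IsOpen {x : T | 0 < F x} := isOpen_lt continuous_const hFc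
  refine Filter.mem_of_superset (hVopen.mem_nhdsSet.mpr ?_) ?_
  · -- stratum ⊆ V
    intro x hx
    simp only [Set.mem_setOf_eq] at hx ⊢
    set s := Finset.univ.filter (fun i => 0 < x.1 i) with hs
    have hne : s.Nonempty := by
      by_contra h
      rw [Finset.not_nonempty_iff_eq_empty] at h
      have : ∀ i, x.1 i = 0 := by
        intro i
        by_contra hi
        have : 0 < x.1 i := lt_of_le_of_ne (x.2.1 i) (Ne.symm hi)
        have : i ∈ s := by simp [hs, this]
        simp [h] at this
      have h10 : (1:ℝ) = 0 := by
        rw [← x.2.2]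
        exact Finset.sum_eq_zero fun i _ => this i
      norm_num at h10
    have hi₀ : s.sup id ∈ s := by
      rw [← Finset.sup'_eq_sup hne, ← Finset.max'_eq_sup']
      exact Finset.max'_mem _ _
    have hx0 : 0 < x.1 (s.sup id) := (Finset.mem_filter.mp hi₀).2
    have hLp : L (s.sup id) = p := hx
    -- sNotLe = 0
    have h1 : sNotLe L p x.1 = 0 := by
      apply Finset.sum_eq_zero
      intro i hi
      rw [Finset.mem_filter] at hi
      by_contra hxi
      have hpos : 0 < x.1 i := lt_of_le_of_ne (x.2.1 i) (Ne.symm hxi)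
      have : i ∈ s := by simp [hs, hpos]
      have hle : i ≤ s.sup id := Finset.le_sup (f := id) this
      exact hi.2 (hLp ▸ hL hle)
    have h2 : 0 < sEq L p x.1 := by
      have hmem2 : s.sup id ∈ Finset.univ.filter (fun i => L i = p) := by
        simp [hLp]
      exact lt_of_lt_of_le hx0
        (Finset.single_le_sum (fun i _ => x.2.1 i) hmem2)
    have h3 : 0 < sNotLt L p x.1 := by
      have hmem3 : s.sup id ∈ Finset.univ.filter (fun i => ¬ L i < p) := by
        simp [hLp]
      exact lt_of_lt_of_le hx0
        (Finset.single_le_sum (fun i _ => x.2.1 i) hmem3)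
    have h4 : 0 < φ (sNotLt L p x.1) := hφpos _ (hmem x) h3
    simp only [hF, h1, sub_zero]
    exact mul_pos h4 h2
  · intro x hx
    simp only [Set.mem_setOf_eq, hF] at hx ⊢
    change 0 < φ (sNotLt L p x.1) * sEq L p x.1 - sNotLe L p x.1 at hx
    linarith


end
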